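/- arXiv:2002.04135 — 7 statements merged into one kernel-verified Lean document; each statement's English description precedes it below -/
import Mathlib

section
/- For positive reals a and b, the conditions s = a + b + 2*sqrt(ab) and s = a + b + 1 - 2*sqrt(ab+a+b) together imply 36(a+b-1/3)^2 + 12(a-b)^2 = 1. -/
theorem depth_two_ellipse (a b s : ℝ) (ha : 0 < a) (hb : 0 < b)
    (h1 : s = a + b + 2*Real.sqrt (a*b))
    (h2 : s = a + b + 1 - 2*Real.sqrt (a*b + a + b)) :
    36*(a + b - 1/3)^2 + 12*(a - b)^2 = 1 := by
  set u := Real.sqrt (a*b) with hu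
  set v := Real.sqrt (a*b + a + b) with hv
  have hu2 : u^2 = a*b := Real.sq_sqrt (by positivity)
  have hv2 : v^2 = a*b + a + b := Real.sq_sqrt (by positivity)
  have huv : u + v = 1/2 := by linarith
  have hsub : v - u = 2*(a + b) := by
    have : (v - u) * (v + u) = a + b := by ring_nf; nlinarith [hu2, hv2]
    nlinarith [this, huv]
  have hueq : u = 1/4 - (a + b) := by linarith
  nlinarith [hu2, hueq]
end

section
/- For positive reals a, b with sqrt(ab) + sqrt(ab+a+b) = 1/2, we have (a+b)^2 - (a+b)/2 - ab + 1/16 = 0. -/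
theorem sqrt_elimination (a b : ℝ) (ha : 0 < a) (hb : 0 < b)
    (h : Real.sqrt (a*b) + Real.sqrt (a*b + a + b) = 1/2) :
    (a + b)^2 - (a + b)/2 - a*b + 1/16 = 0 := by
  have hab : (0:ℝ) ≤ a*b := by positivity
  have hab2 : (0:ℝ) ≤ a*b + a + b := by positivity
  have hu : Real.sqrt (a*b) ^ 2 = a*b := Real.sq_sqrt hab
  have hv : Real.sqrt (a*b + a + b) ^ 2 = a*b + a + b := Real.sq_sqrt hab2
  set u := Real.sqrt (a*b)
  set v := Real.sqrt (a*b + a + b)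
  have hdiff : v - u = 2*(a+b) := by nlinarith [hu, hv, h]
  nlinarith [hu, hv, h, hdiff]
end

section
/- Let φ = (1+√5)/2 and p = φ − √φ. Then 0 < p < 1, and the triple (p^2, p, 1) satisfies p^2 = p + 1 + p^{-1} − 2*sqrt(p·1 + 1·p^{-1} + p^{-1}·p); that is, replacing the largest entry p^{-1} of the triple (p, 1, p^{-1}) by the smaller Descartes solution yields the triple (p^2, p, 1), which is the original triple rescaled by p. -/
theorem golden_triple_self_similar :
    let φ : ℝ := (1 + Real.sqrt 5)/2
    let p : ℝ := φ - Real.sqrt φ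
    0 < p ∧ p < 1 ∧
    p^2 = p + 1 + p⁻¹ - 2*Real.sqrt (p*1 + 1*p⁻¹ + p⁻¹*p) ∧
    (p^2, p, (1:ℝ)) = (p*p, p*1, p*p⁻¹) := by
  intro φ p
  have hs5 : Real.sqrt 5 ^ 2 = 5 := Real.sq_sqrt (by norm_num)
  have hs5pos : (2:ℝ) < Real.sqrt 5 := by
    nlinarith [Real.sqrt_nonneg 5]
  have hφ1 : (1:ℝ) < φ := by simp only [φ]; nlinarith
  have hφsq : φ^2 = φ + 1 := by simp only [φ]; nlinarith
  have ht : Real.sqrt φ ^ 2 = φ := Real.sq_sqrt (by linarith)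
  set t := Real.sqrt φ with htdef
  have ht1 : (1:ℝ) < t := by nlinarith [Real.sqrt_nonneg φ]
  have hp0 : 0 < p := by simp only [p]; nlinarith
  have hp1 : p < 1 := by simp only [p]; nlinarith
  have hinv : p⁻¹ = φ + t := by
    exact inv_eq_of_mul_eq_one_right (by simp only [p]; nlinarith)
  have hsqrt : Real.sqrt (p*1 + 1*p⁻¹ + p⁻¹*p) = φ * t := by
    have harg : p*1 + 1*p⁻¹ + p⁻¹*p = (φ * t)^2 := by
      rw [hinv]; simp only [p]; nlinarith
    rw [harg, Real.sqrt_sq (by positivity)]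
  refine ⟨hp0, hp1, ?_, ?_⟩
  · rw [hsqrt, hinv]; simp only [p]; nlinarith
  · have : p * p⁻¹ = 1 := mul_inv_cancel₀ (ne_of_gt hp0)
    simp [this, sq]
end

section
/- Let φ = (1+√5)/2 and p = φ − √φ. Then p + 1 + 1/p − 2*sqrt(p + 1/p + 1) = p^2. -/
theorem golden_step :
    let φ : ℝ := (1 + Real.sqrt 5)/2
    let p : ℝ := φ - Real.sqrt φ
    p + 1 + 1/p - 2*Real.sqrt (p + 1/p + 1) = p^2 := by
  intro φ p
  have h5 : Real.sqrt 5 ^ 2 = 5 := Real.sq_sqrt (by norm_num)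
  have h5n : Real.sqrt 5 ≥ 2 := by nlinarith [Real.sqrt_nonneg 5]
  have hφpos : (0:ℝ) < φ := by simp only [φ]; nlinarith
  have hq : Real.sqrt φ ^ 2 = φ := Real.sq_sqrt hφpos.le
  have hqn : Real.sqrt φ ≥ 0 := Real.sqrt_nonneg φ
  have hφgt1 : φ > 1 := by simp only [φ]; nlinarith
  have hφsq : φ^2 = φ + 1 := by simp only [φ]; nlinarith
  have hpq : φ > Real.sqrt φ := by nlinarith
  have hppos : 0 < p := by simp only [p]; linarith
  have hinv : 1/p = φ + Real.sqrt φ := by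
    rw [eq_comm, eq_div_iff hppos.ne']
    simp only [p]; nlinarith
  have hsum : p + 1/p + 1 = (φ * Real.sqrt φ)^2 := by
    rw [hinv]; simp only [p]; nlinarith
  rw [hsum, Real.sqrt_sq (by positivity)]
  rw [hinv]; simp only [p]; nlinarith
end

section
/- Define the ellipse E[p,m] for coprime positive integers p < m by the equation ((m/p)x + (p^2+m^2−1)/(pm)·y)^2 + p^2/m^2 = 4xy + 2x + 2((m^2−p^2+1)/m^2)·y. Then E[p,m] is tangent to the x-axis at the point (p^2/m^2, 0); that is, (p^2/m^2, 0) lies on E[p,m], and it is the unique point of E[p,m] with y = 0. -/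
/-- The point (x,y) lies on the ellipse E[p,m] of the x-axis corona. -/
def onCoronaEllipse (p m : ℕ) (x y : ℝ) : Prop :=
  ((m/p : ℝ)*x + (((p:ℝ)^2 + (m:ℝ)^2 - 1)/((p:ℝ)*(m:ℝ)))*y)^2 + (p:ℝ)^2/(m:ℝ)^2 =
    4*x*y + 2*x + 2*(((m:ℝ)^2 - (p:ℝ)^2 + 1)/(m:ℝ)^2)*y

theorem corona_ellipse_tangent_x_axis (p m : ℕ) (hp : 0 < p) (hpm : p < m)
    (hcop : Nat.Coprime p m) :
    onCoronaEllipse p m ((p:ℝ)^2/(m:ℝ)^2) 0 ∧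
    ∀ x : ℝ, onCoronaEllipse p m x 0 → x = (p:ℝ)^2/(m:ℝ)^2 := by
  have hp' : (p:ℝ) ≠ 0 := by positivity
  have hm' : (m:ℝ) ≠ 0 := by
    have : 0 < m := lt_trans hp hpm
    positivity
  constructor
  · unfold onCoronaEllipse
    field_simp
    ring
  · intro x hx
    unfold onCoronaEllipse at hx
    have key : ((m:ℝ)/p * x - (p:ℝ)/m)^2 = 0 := by
      have := hx
      field_simp at this ⊢
      nlinarith [this]
    have h2 : (m:ℝ)/p * x - (p:ℝ)/m = 0 := by
      exact pow_eq_zero_iff (n := 2) (by norm_num) |>.mp key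
    have h3 : (m:ℝ)/p * x = (p:ℝ)/m := by linarith
    field_simp at h3
    field_simp
    nlinarith [h3]
end

section
/- For every natural number p ≥ 1, the point (p^2/(p+1)^2, 1/(p+1)^2) lies on the parabola 2(x+y) = (x−y)^2+1 and on the ellipse given by (((p+1)/p)x + 2y)^2 + p^2/(p+1)^2 = 4xy + 2x + (4/(p+1))y; moreover, this ellipse is tangent to the x-axis at (p^2/(p+1)^2, 0), so the tangency points with the x-axis and with the parabola are vertically aligned. -/
theorem main_chain_vertical_alignment (p : ℕ) (hp : 1 ≤ p) :
    let x0 : ℝ := (p:ℝ)^2 / ((p:ℝ)+1)^2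
    let y0 : ℝ := 1 / ((p:ℝ)+1)^2
    let E : ℝ → ℝ → Prop := fun x y =>
      ((((p:ℝ)+1)/(p:ℝ))*x + 2*y)^2 + (p:ℝ)^2/((p:ℝ)+1)^2 =
        4*x*y + 2*x + (4/((p:ℝ)+1))*y
    (2*(x0 + y0) = (x0 - y0)^2 + 1) ∧
    E x0 y0 ∧
    E x0 0 ∧
    (∀ x : ℝ, E x 0 → x = x0) := by
  intro x0 y0 E
  have ha : (1:ℝ) ≤ (p:ℝ) := by exact_mod_cast hp
  have hp0 : (p:ℝ) ≠ 0 := by linarith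
  have hp1 : (p:ℝ) + 1 ≠ 0 := by linarith
  refine ⟨?_, ?_, ?_, ?_⟩
  · show 2*(x0 + y0) = (x0 - y0)^2 + 1
    simp only [x0, y0]
    field_simp
    ring
  · show E x0 y0
    simp only [E, x0, y0]
    field_simp
    ring
  · show E x0 0
    simp only [E, x0]
    field_simp
    ring
  · intro x hx
    simp only [E] at hx
    have key : (((p:ℝ)+1)/(p:ℝ) * x - (p:ℝ)/((p:ℝ)+1))^2 = 0 := by
      field_simp at hx ⊢
      nlinarith [hx]
    have h2 : ((p:ℝ)+1)/(p:ℝ) * x - (p:ℝ)/((p:ℝ)+1) = 0 := by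
      exact pow_eq_zero_iff (n := 2) (by norm_num) |>.mp key
    simp only [x0]
    field_simp at h2 ⊢
    linarith
end

section
/- For all x, y satisfying 16x^2 + 28xy + 16y^2 − 2x − 2y + 1/16 = 0, setting s1 = 1/4 − 3x − 3y, s2 = 2(x+y+s1), s3 = (s2+1)/2 − x − y gives (s1 + x + y)^2 = 2(s1^2 + x^2 + y^2) and also (1 + s3 + x + y)^2 = 2(1 + s3^2 + x^2 + y^2). -/
theorem depth4_ellipse_descartes (x y : ℝ)
    (h : 16*x^2 + 28*x*y + 16*y^2 - 2*x - 2*y + 1/16 = 0) :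
    ∀ s1 s2 s3 : ℝ, s1 = 1/4 - 3*x - 3*y → s2 = 2*(x + y + s1) →
      s3 = (s2 + 1)/2 - x - y →
      (s1 + x + y)^2 = 2*(s1^2 + x^2 + y^2) ∧
      (1 + s3 + x + y)^2 = 2*(1 + s3^2 + x^2 + y^2) := by
  rintro s1 s2 s3 rfl rfl rfl
  constructor <;> nlinarith [h, sq_nonneg (x - y), sq_nonneg (x + y)]
end
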